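/- Let d ≥ 1 and b ∈ (0,1). For all measurable functions f, g : ℝ^d → ℂ one has ‖𝒟^b(f g)‖_{L²(ℝ^d)} ≤ ‖f · 𝒟^b g‖_{L²(ℝ^d)} + ‖g · 𝒟^b f‖_{L²(ℝ^d)} (as an inequality in the extended reals). -/

import Mathlib

open MeasureTheory Complex ENNReal NNReal

noncomputable section

/-- Stein derivative of order `b` on `ℝ^d`:
`𝒟^b g(x) = (∫ |g(x)-g(y)|²/|x-y|^{d+2b} dy)^{1/2}`, valued in `ℝ≥0∞`. -/
def steinDerivE (d : ℕ) (b : ℝ) (g : EuclideanSpace ℝ (Fin d) → ℂ)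
    (x : EuclideanSpace ℝ (Fin d)) : ℝ≥0∞ :=
  (∫⁻ y : EuclideanSpace ℝ (Fin d),
      ENNReal.ofReal (‖g x - g y‖ ^ 2 / ‖x - y‖ ^ ((d : ℝ) + 2 * b))) ^ ((1:ℝ)/2)

/-- `L²(ℝ^d)` norm of the Stein derivative-type quantity (in the extended reals). -/
def steinE_L2 (d : ℕ) (F : EuclideanSpace ℝ (Fin d) → ℝ≥0∞) : ℝ≥0∞ :=
  (∫⁻ x : EuclideanSpace ℝ (Fin d), F x ^ (2:ℝ)) ^ ((1:ℝ)/2)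

namespace SteinLeibnizAux

variable {d : ℕ}

/-- The kernel `‖x-y‖^{d+2b}` as an extended real. -/
def kern (d : ℕ) (b : ℝ) (x y : EuclideanSpace ℝ (Fin d)) : ℝ≥0∞ :=
  ENNReal.ofReal (‖x - y‖ ^ ((d : ℝ) + 2 * b))

lemma kern_symm (b : ℝ) (x y : EuclideanSpace ℝ (Fin d)) :
    kern d b x y = kern d b y x := by
  simp [kern, norm_sub_rev]

lemma measurable_kern (b : ℝ) :
    Measurable fun p : EuclideanSpace ℝ (Fin d) × EuclideanSpace ℝ (Fin d) =>
      kern d b p.1 p.2 := by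
  apply Measurable.ennreal_ofReal
  exact ((measurable_fst.sub measurable_snd).norm).pow_const _

/-- Rewriting of the Stein derivative with ℝ≥0∞-valued arithmetic. -/
lemma rep (b : ℝ) (h : EuclideanSpace ℝ (Fin d) → ℂ) (x : EuclideanSpace ℝ (Fin d)) :
    steinDerivE d b h x
      = (∫⁻ y, ((‖h x - h y‖₊ : ℝ≥0∞)) ^ (2:ℝ) / kern d b x y) ^ ((1:ℝ)/2) := by
  unfold steinDerivE
  congr 1
  refine lintegral_congr fun y => ?_
  by_cases hy : y = x
  · subst hy
    simp [kern, ENNReal.rpow_two]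
  · have hxy : (0:ℝ) < ‖x - y‖ := by
      rw [norm_pos_iff, sub_ne_zero]
      exact fun e => hy e.symm
    have hK : (0:ℝ) < ‖x - y‖ ^ ((d:ℝ) + 2*b) := Real.rpow_pos_of_pos hxy _
    rw [ENNReal.ofReal_div_of_pos hK, ENNReal.ofReal_pow (norm_nonneg _)]
    rw [show ((2:ℝ)) = ((2:ℕ):ℝ) by norm_num, ENNReal.rpow_natCast]
    simp only [kern, ofReal_norm_eq_enorm]
    rfl

lemma measurable_stein (b : ℝ) {h : EuclideanSpace ℝ (Fin d) → ℂ} (hh : Measurable h) :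
    Measurable (steinDerivE d b h) := by
  unfold steinDerivE
  apply Measurable.pow_const
  apply Measurable.lintegral_prod_right'
    (f := fun p : EuclideanSpace ℝ (Fin d) × EuclideanSpace ℝ (Fin d) =>
      ENNReal.ofReal (‖h p.1 - h p.2‖ ^ 2 / ‖p.1 - p.2‖ ^ ((d : ℝ) + 2 * b)))
  apply Measurable.ennreal_ofReal
  exact (((hh.comp measurable_fst).sub (hh.comp measurable_snd)).norm.pow_const 2).div
    ((measurable_fst.sub measurable_snd).norm.pow_const _)

/-- The auxiliary mixed term. -/
def Hfun (d : ℕ) (b : ℝ) (f g : EuclideanSpace ℝ (Fin d) → ℂ)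
    (x : EuclideanSpace ℝ (Fin d)) : ℝ≥0∞ :=
  (∫⁻ y, (‖g y‖₊ : ℝ≥0∞) ^ (2:ℝ) * (‖f x - f y‖₊ : ℝ≥0∞) ^ (2:ℝ) / kern d b x y) ^ ((1:ℝ)/2)

lemma measurable_Hkernel (b : ℝ) {f g : EuclideanSpace ℝ (Fin d) → ℂ}
    (hf : Measurable f) (hg : Measurable g) :
    Measurable fun p : EuclideanSpace ℝ (Fin d) × EuclideanSpace ℝ (Fin d) =>
      (‖g p.2‖₊ : ℝ≥0∞) ^ (2:ℝ) * (‖f p.1 - f p.2‖₊ : ℝ≥0∞) ^ (2:ℝ) / kern d b p.1 p.2 := by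
  apply Measurable.div _ (measurable_kern b)
  exact (((hg.comp measurable_snd).nnnorm.coe_nnreal_ennreal).pow_const _).mul
    ((((hf.comp measurable_fst).sub (hf.comp measurable_snd)).nnnorm.coe_nnreal_ennreal).pow_const _)

lemma measurable_Hfun (b : ℝ) {f g : EuclideanSpace ℝ (Fin d) → ℂ}
    (hf : Measurable f) (hg : Measurable g) :
    Measurable (Hfun d b f g) := by
  unfold Hfun
  exact ((measurable_Hkernel b hf hg).lintegral_prod_right').pow_const _

lemma sq_half (t : ℝ≥0∞) : (t ^ ((1:ℝ)/2)) ^ (2:ℝ) = t := by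
  rw [← ENNReal.rpow_mul]
  norm_num

/-- Pointwise Leibniz bound. -/
lemma pointwise (b : ℝ) (f g : EuclideanSpace ℝ (Fin d) → ℂ)
    (hf : Measurable f) (hg : Measurable g) (x : EuclideanSpace ℝ (Fin d)) :
    steinDerivE d b (fun z => f z * g z) x
      ≤ (‖f x‖₊ : ℝ≥0∞) * steinDerivE d b g x + Hfun d b f g x := by
  rw [rep b (fun z => f z * g z), rep b g]
  set k : EuclideanSpace ℝ (Fin d) → ℝ≥0∞ := fun y => kern d b x y with hk
  set A : EuclideanSpace ℝ (Fin d) → ℝ≥0∞ :=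
    fun y => (‖f x‖₊ : ℝ≥0∞) * (‖g x - g y‖₊ : ℝ≥0∞) / (k y) ^ ((1:ℝ)/2) with hA
  set B : EuclideanSpace ℝ (Fin d) → ℝ≥0∞ :=
    fun y => (‖g y‖₊ : ℝ≥0∞) * (‖f x - f y‖₊ : ℝ≥0∞) / (k y) ^ ((1:ℝ)/2) with hB
  have hmA : Measurable A := by
    apply Measurable.div
    · exact measurable_const.mul ((measurable_const.sub hg).nnnorm.coe_nnreal_ennreal)
    · exact ((measurable_kern (d := d) b).comp (measurable_const.prodMk measurable_id)).pow_const _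
  have hmB : Measurable B := by
    apply Measurable.div
    · exact (hg.nnnorm.coe_nnreal_ennreal).mul ((measurable_const.sub hf).nnnorm.coe_nnreal_ennreal)
    · exact ((measurable_kern (d := d) b).comp (measurable_const.prodMk measurable_id)).pow_const _
  have key : ∀ y, ((‖f x * g x - f y * g y‖₊ : ℝ≥0∞)) ^ (2:ℝ) / k y ≤ (A y + B y) ^ (2:ℝ) := by
    intro y
    have htri : (‖f x * g x - f y * g y‖₊ : ℝ≥0∞)
        ≤ (‖f x‖₊ : ℝ≥0∞) * ‖g x - g y‖₊ + (‖g y‖₊ : ℝ≥0∞) * ‖f x - f y‖₊ := by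
      have e : f x * g x - f y * g y = f x * (g x - g y) + (f x - f y) * g y := by ring
      rw [e]
      calc (‖f x * (g x - g y) + (f x - f y) * g y‖₊ : ℝ≥0∞)
          ≤ (‖f x * (g x - g y)‖₊ : ℝ≥0∞) + (‖(f x - f y) * g y‖₊ : ℝ≥0∞) := by
            exact_mod_cast nnnorm_add_le _ _
        _ = (‖f x‖₊ : ℝ≥0∞) * ‖g x - g y‖₊ + (‖g y‖₊ : ℝ≥0∞) * ‖f x - f y‖₊ := by
            push_cast [nnnorm_mul]
            ring
    have hAB : A y + B y
        = ((‖f x‖₊ : ℝ≥0∞) * ‖g x - g y‖₊ + (‖g y‖₊ : ℝ≥0∞) * ‖f x - f y‖₊) / (k y) ^ ((1:ℝ)/2) :=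
      ENNReal.div_add_div_same
    rw [hAB, ENNReal.div_rpow_of_nonneg _ _ (by norm_num), sq_half]
    gcongr
  calc (∫⁻ y, ((‖f x * g x - f y * g y‖₊ : ℝ≥0∞)) ^ (2:ℝ) / k y) ^ ((1:ℝ)/2)
      ≤ (∫⁻ y, ((A + B) y) ^ (2:ℝ)) ^ ((1:ℝ)/2) := by
        gcongr with y
        exact key y
    _ ≤ (∫⁻ y, A y ^ (2:ℝ)) ^ ((1:ℝ)/2) + (∫⁻ y, B y ^ (2:ℝ)) ^ ((1:ℝ)/2) :=
        ENNReal.lintegral_Lp_add_le hmA.aemeasurable hmB.aemeasurable one_le_two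
    _ = (‖f x‖₊ : ℝ≥0∞) * (∫⁻ y, ((‖g x - g y‖₊ : ℝ≥0∞)) ^ (2:ℝ) / k y) ^ ((1:ℝ)/2)
          + Hfun d b f g x := by
        congr 1
        · have : ∀ y, A y ^ (2:ℝ)
              = (‖f x‖₊ : ℝ≥0∞) ^ (2:ℝ) * ((‖g x - g y‖₊ : ℝ≥0∞) ^ (2:ℝ) / k y) := by
            intro y
            rw [hA]
            rw [ENNReal.div_rpow_of_nonneg _ _ (by norm_num : (0:ℝ) ≤ 2),
              ENNReal.mul_rpow_of_nonneg _ _ (by norm_num : (0:ℝ) ≤ 2), sq_half,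
              mul_div_assoc]
          rw [lintegral_congr this,
            lintegral_const_mul' _ _ (by
              rw [← ENNReal.coe_rpow_of_nonneg _ (by norm_num : (0:ℝ) ≤ 2)]
              exact ENNReal.coe_ne_top),
            ENNReal.mul_rpow_of_nonneg _ _ (by norm_num : (0:ℝ) ≤ (1:ℝ)/2),
            ← ENNReal.rpow_mul]
          norm_num
        · rw [Hfun]
          congr 1
          refine lintegral_congr fun y => ?_
          rw [hB, ENNReal.div_rpow_of_nonneg _ _ (by norm_num : (0:ℝ) ≤ 2),
            ENNReal.mul_rpow_of_nonneg _ _ (by norm_num : (0:ℝ) ≤ 2), sq_half]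

/-- The L² norm of the mixed term equals `‖g 𝒟^b f‖_{L²}` (Fubini + symmetry). -/
lemma Hfun_L2 (b : ℝ) (f g : EuclideanSpace ℝ (Fin d) → ℂ)
    (hf : Measurable f) (hg : Measurable g) :
    steinE_L2 d (Hfun d b f g)
      = steinE_L2 d (fun x => (‖g x‖₊ : ℝ≥0∞) * steinDerivE d b f x) := by
  unfold steinE_L2
  congr 1
  have h1 : ∀ x, Hfun d b f g x ^ (2:ℝ)
      = ∫⁻ y, (‖g y‖₊ : ℝ≥0∞) ^ (2:ℝ) * (‖f x - f y‖₊ : ℝ≥0∞) ^ (2:ℝ) / kern d b x y :=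
    fun x => sq_half _
  rw [lintegral_congr h1]
  rw [lintegral_lintegral_swap ((measurable_Hkernel b hf hg).aemeasurable)]
  refine lintegral_congr fun y => ?_
  have h2 : ∀ x : EuclideanSpace ℝ (Fin d),
      (‖g y‖₊ : ℝ≥0∞) ^ (2:ℝ) * (‖f x - f y‖₊ : ℝ≥0∞) ^ (2:ℝ) / kern d b x y
        = (‖g y‖₊ : ℝ≥0∞) ^ (2:ℝ) * ((‖f y - f x‖₊ : ℝ≥0∞) ^ (2:ℝ) / kern d b y x) := by
    intro x
    have e1 : (‖f x - f y‖₊ : ℝ≥0∞) = (‖f y - f x‖₊ : ℝ≥0∞) := by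
      rw [← nnnorm_neg (f x - f y)]
      congr 1
      ring_nf
    rw [e1, kern_symm, mul_div_assoc]
  rw [lintegral_congr h2,
    lintegral_const_mul' _ _ (by
      rw [← ENNReal.coe_rpow_of_nonneg _ (by norm_num : (0:ℝ) ≤ 2)]
      exact ENNReal.coe_ne_top),
    ENNReal.mul_rpow_of_nonneg _ _ (by norm_num : (0:ℝ) ≤ 2), rep b]
  rw [sq_half]

end SteinLeibnizAux

open SteinLeibnizAux in
/-- product estimate \eqref{Leib}: for `d ≥ 1`, `b ∈ (0,1)` and measurable
`f, g : ℝ^d → ℂ`, `‖𝒟^b(fg)‖_{L²} ≤ ‖f 𝒟^b g‖_{L²} + ‖g 𝒟^b f‖_{L²}` in `ℝ≥0∞`. -/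
theorem stein_deriv_leibniz (d : ℕ) (hd : 1 ≤ d) (b : ℝ) (hb : b ∈ Set.Ioo (0:ℝ) 1)
    (f g : EuclideanSpace ℝ (Fin d) → ℂ) (hf : Measurable f) (hg : Measurable g) :
    steinE_L2 d (steinDerivE d b (fun z => f z * g z)) ≤
      steinE_L2 d (fun x => (‖f x‖₊ : ℝ≥0∞) * steinDerivE d b g x) +
        steinE_L2 d (fun x => (‖g x‖₊ : ℝ≥0∞) * steinDerivE d b f x) := by
  have step1 : steinE_L2 d (steinDerivE d b (fun z => f z * g z))
      ≤ steinE_L2 d (fun x => (‖f x‖₊ : ℝ≥0∞) * steinDerivE d b g x + Hfun d b f g x) := by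
    unfold steinE_L2
    gcongr with x
    exact pointwise b f g hf hg x
  refine step1.trans ?_
  have hm1 : AEMeasurable (fun x => (‖f x‖₊ : ℝ≥0∞) * steinDerivE d b g x) volume :=
    ((hf.nnnorm.coe_nnreal_ennreal).mul (measurable_stein b hg)).aemeasurable
  have hm2 : AEMeasurable (Hfun d b f g) volume := (measurable_Hfun b hf hg).aemeasurable
  have tri := ENNReal.lintegral_Lp_add_le (p := 2) hm1 hm2 one_le_two
  rw [← Hfun_L2 b f g hf hg]
  exact tri
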